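/- arXiv:2509.07598 — 3 statements merged into one kernel-verified Lean document; each statement's English description precedes it below -/
import Mathlib

section
/- For every real x > 1, the identity Li₂(2-x) - Li₂(1/x) - (1/2)·Li₂(2x - x²) + π²/12 - (1/2)·ln²(x) = 0 holds, provided x ≤ 2 (so that all arguments lie in [-1,1]). -/
open Real MeasureTheory

open Set Filter


-- series for -log(1-t)/t
lemma hasSum_aux {t : ℝ} (h0 : 0 < t) (h1 : t < 1) :
    HasSum (fun n : ℕ => t ^ n / (n + 1)) (-(Real.log (1 - t) / t)) := by
  have h := (hasSum_pow_div_log_of_abs_lt_one (by rw [abs_of_pos h0]; exact h1)).div_const t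
  rw [show -(Real.log (1 - t) / t) = -Real.log (1 - t) / t by ring]
  convert h using 2 with n
  · rfl
  rw [pow_succ]
  field_simp

lemma basel' : HasSum (fun n : ℕ => 1 / ((n : ℝ) + 1) ^ 2) (Real.pi ^ 2 / 6) := by
  have h := hasSum_zeta_two
  have h2 := (hasSum_nat_add_iff' (f := fun n : ℕ => 1 / (n:ℝ)^2) 1).2 h
  simp only [Nat.cast_add, Nat.cast_one, Finset.range_one, Finset.sum_singleton,
    Nat.cast_zero] at h2
  simpa using h2

lemma g_integral (n : ℕ) : ∫ t in Set.Ioo (0:ℝ) 1, t ^ n / ((n : ℝ) + 1) = 1 / ((n:ℝ)+1)^2 := by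
  rw [← MeasureTheory.integral_Ioc_eq_integral_Ioo, ← intervalIntegral.integral_of_le zero_le_one,
    intervalIntegral.integral_div, integral_pow]
  have hn : ((n : ℝ) + 1) ≠ 0 := by positivity
  rw [one_pow, zero_pow (by omega)]
  push_cast
  field_simp
  ring


lemma neg_log_le {t : ℝ} (h0 : 0 ≤ t) (h1 : t < 1) : -Real.log (1 - t) ≤ t / (1 - t) := by
  have h : (0:ℝ) < 1 - t := by linarith
  have := Real.log_le_sub_one_of_pos (x := (1 - t)⁻¹) (by positivity)
  rw [Real.log_inv] at this
  have h2 : (1 - t)⁻¹ - 1 = t / (1 - t) := by field_simp; ring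
  linarith [h2 ▸ this]

lemma neg_log_le_sqrt {u : ℝ} (h0 : 0 < u) : -Real.log u ≤ 2 / Real.sqrt u := by
  have hs : 0 < Real.sqrt u := Real.sqrt_pos.2 h0
  have := Real.log_le_sub_one_of_pos (x := (Real.sqrt u)⁻¹) (by positivity)
  rw [Real.log_inv, Real.log_sqrt h0.le] at this
  rw [div_eq_mul_inv]
  nlinarith [this, inv_nonneg.2 hs.le]

lemma f_bound {t : ℝ} (ht : t ∈ Set.Ioc (0:ℝ) 1) :
    ‖Real.log (1 - t) / t‖ ≤ ‖2 + 4 * ((1 - t) ^ (-(1/2) : ℝ))‖ := by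
  have h0 := ht.1
  have h1 := ht.2
  have hrn : (0:ℝ) ≤ (1 - t) ^ (-(1/2) : ℝ) := Real.rpow_nonneg (by linarith) _
  rw [Real.norm_eq_abs, Real.norm_of_nonneg (by linarith)]
  rcases eq_or_lt_of_le h1 with rfl | h1
  · simp
  have hml : (0:ℝ) < 1 - t := by linarith
  have hlog : Real.log (1 - t) ≤ 0 := Real.log_nonpos (by linarith) (by linarith)
  rw [abs_div, abs_of_nonpos hlog, abs_of_pos h0]
  have hrw : (1 - t) ^ (-(1/2) : ℝ) = (Real.sqrt (1 - t))⁻¹ := by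
    rw [Real.rpow_neg hml.le, Real.sqrt_eq_rpow]
  have hsq : (0:ℝ) < Real.sqrt (1 - t) := Real.sqrt_pos.2 hml
  rcases le_or_gt t (1/2) with hc | hc
  · have hl := neg_log_le h0.le h1
    have h2 : t / (1 - t) ≤ 2 * t := by
      rw [div_le_iff₀ hml]; nlinarith
    have : -Real.log (1 - t) / t ≤ 2 := by
      rw [div_le_iff₀ h0]; nlinarith
    linarith
  · have hl := neg_log_le_sqrt hml
    have ha : -Real.log (1 - t) / t ≤ (2 / Real.sqrt (1 - t)) / t :=
      div_le_div_of_nonneg_right hl h0.le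
    have hb : (2 / Real.sqrt (1 - t)) / t ≤ 4 * (Real.sqrt (1 - t))⁻¹ := by
      rw [div_div, div_eq_mul_inv, mul_inv]
      have hti : (Real.sqrt (1 - t))⁻¹ * t⁻¹ ≤ (Real.sqrt (1 - t))⁻¹ * 2 := by
        have h2 : t⁻¹ ≤ 2 := by
          rw [inv_le_comm₀ h0 (by norm_num)]; linarith
        have := inv_nonneg.2 hsq.le
        nlinarith
      nlinarith [inv_nonneg.2 hsq.le]
    rw [hrw]
    linarith



lemma f_intervalIntegrable : IntervalIntegrable (fun t => Real.log (1 - t) / t) volume 0 1 := by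
  have hg : IntervalIntegrable (fun t : ℝ => 2 + 4 * ((1 - t) ^ (-(1/2) : ℝ))) volume 0 1 := by
    apply IntervalIntegrable.add intervalIntegrable_const
    apply IntervalIntegrable.const_mul
    have h1 := (intervalIntegral.intervalIntegrable_rpow' (a := (0:ℝ)) (b := 1) (r := -(1/2)) (by norm_num))
    have h2 := h1.comp_sub_left 1
    norm_num at h2
    exact h2.symm
  apply hg.mono_fun
  · exact ((Real.measurable_log.comp (measurable_const.sub measurable_id)).div
      measurable_id).aestronglyMeasurable
  · rw [uIoc_of_le (by norm_num : (0:ℝ) ≤ 1)]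
    exact (ae_restrict_iff' measurableSet_Ioc).2 (ae_of_all _ fun t ht => f_bound ht)

lemma f_integral : ∫ t in Set.Ioo (0:ℝ) 1, Real.log (1 - t) / t = -(Real.pi^2/6) := by
  have hgi : ∀ n : ℕ, Integrable (fun t => t ^ n / ((n:ℝ) + 1))
      (volume.restrict (Set.Ioo (0:ℝ) 1)) := fun n =>
    (((continuous_pow n).div_const _).integrableOn_Ioc).mono_set Set.Ioo_subset_Ioc_self
  have hnorm : ∀ n : ℕ, ∫ t in Set.Ioo (0:ℝ) 1, ‖t ^ n / ((n:ℝ)+1)‖ = 1 / ((n:ℝ)+1)^2 := by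
    intro n
    rw [← g_integral n]
    apply setIntegral_congr_fun measurableSet_Ioo
    intro t ht
    exact Real.norm_of_nonneg (div_nonneg (pow_nonneg ht.1.le n) (by positivity))
  have hsum : Summable fun n : ℕ => ∫ t in Set.Ioo (0:ℝ) 1, ‖t^n / ((n:ℝ)+1)‖ := by
    simp_rw [hnorm]; exact basel'.summable
  have key := MeasureTheory.integral_tsum_of_summable_integral_norm hgi hsum
  have h2 : ∫ t in Set.Ioo (0:ℝ) 1, (∑' n : ℕ, t^n/((n:ℝ)+1))
      = ∫ t in Set.Ioo (0:ℝ) 1, -(Real.log (1-t)/t) :=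
    setIntegral_congr_fun measurableSet_Ioo (fun t ht => (hasSum_aux ht.1 ht.2).tsum_eq)
  have h3 : (∑' n : ℕ, ∫ t in Set.Ioo (0:ℝ) 1, t^n/((n:ℝ)+1)) = Real.pi^2/6 := by
    rw [tsum_congr (fun n => g_integral n)]
    exact basel'.tsum_eq
  rw [h3, h2, integral_neg] at key
  linarith


noncomputable def Li2 (x : ℝ) : ℝ := -∫ t in (0:ℝ)..x, Real.log (1 - t) / t


lemma Li2_one : Li2 1 = Real.pi ^ 2 / 6 := by
  unfold Li2
  rw [intervalIntegral.integral_of_le zero_le_one, MeasureTheory.integral_Ioc_eq_integral_Ioo,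
    f_integral]
  ring

lemma Li2_continuousOn : ContinuousOn Li2 (Set.Icc 0 1) := by
  have h := f_intervalIntegrable
  rw [intervalIntegrable_iff_integrableOn_Icc_of_le zero_le_one] at h
  have h2 := (intervalIntegral.continuousOn_primitive_interval
    (f := fun t => Real.log (1 - t) / t) (μ := volume) (a := 0) (b := 1) (by
      rwa [Set.uIcc_of_le zero_le_one])).neg
  rwa [Set.uIcc_of_le zero_le_one] at h2

lemma Li2_hasDerivAt {u : ℝ} (h0 : 0 < u) (h1 : u < 1) :
    HasDerivAt Li2 (-(Real.log (1 - u) / u)) u := by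
  have hii : IntervalIntegrable (fun t => Real.log (1 - t) / t) volume 0 u := by
    apply f_intervalIntegrable.mono_set
    apply Set.uIcc_subset_uIcc left_mem_uIcc
    rw [Set.uIcc_of_le zero_le_one]
    exact ⟨h0.le, h1.le⟩
  have hca : ∀ v ∈ Set.Ioo (0:ℝ) 1, ContinuousAt (fun t => Real.log (1 - t) / t) v := by
    intro v hv
    exact ((Real.continuousAt_log (sub_ne_zero_of_ne (ne_of_gt hv.2))).comp
      ((continuous_const.sub continuous_id).continuousAt)).div continuousAt_id (ne_of_gt hv.1)
  have hmeas : StronglyMeasurableAtFilter (fun t => Real.log (1 - t) / t) (nhds u) volume :=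
    ContinuousAt.stronglyMeasurableAtFilter isOpen_Ioo hca u ⟨h0, h1⟩
  have hd := intervalIntegral.integral_hasDerivAt_right hii hmeas (hca u ⟨h0, h1⟩)
  unfold Li2
  exact hd.neg




theorem second_fixed_point_identity (x : ℝ) (hx1 : 1 < x) (hx2 : x ≤ 2) :
    Li2 (2 - x) - Li2 (1 / x) - (1/2) * Li2 (2 * x - x ^ 2)
      + Real.pi ^ 2 / 12 - (1/2) * (Real.log x) ^ 2 = 0 := by
  set F : ℝ → ℝ := fun y => Li2 (2 - y) - Li2 (1/y) - (1/2) * Li2 (2*y - y^2)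
      + Real.pi ^ 2 / 12 - (1/2) * (Real.log y)^2 with hF
  -- derivative is zero on (1,2)
  have key : ∀ y ∈ Set.Ioo (1:ℝ) 2, HasDerivAt F 0 y := by
    rintro y ⟨hy1, hy2⟩
    have hy0 : (0:ℝ) < y := by linarith
    have h2y0 : (0:ℝ) < 2 - y := by linarith
    have h2y1 : 2 - y < 1 := by linarith
    have hinv0 : 0 < 1/y := by positivity
    have hinv1 : 1/y < 1 := by rw [div_lt_one hy0]; linarith
    have hq0 : 0 < 2*y - y^2 := by nlinarith
    have hq1 : 2*y - y^2 < 1 := by nlinarith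
    have hA : HasDerivAt (fun z => Li2 (2 - z)) (-(Real.log (1 - (2-y))/(2-y)) * (-1)) y :=
      (Li2_hasDerivAt h2y0 h2y1).comp y ((hasDerivAt_id y).const_sub 2)
    have hB : HasDerivAt (fun z => Li2 (1/z)) (-(Real.log (1 - 1/y)/(1/y)) * (-(y^2)⁻¹)) y := by
      have hinv : HasDerivAt (fun z : ℝ => 1/z) (-(y^2)⁻¹) y := by
        simpa [one_div] using hasDerivAt_inv (ne_of_gt hy0)
      exact (Li2_hasDerivAt hinv0 hinv1).comp y hinv
    have hq' : HasDerivAt (fun z : ℝ => 2*z - z^2) (2 - 2*y) y := by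
      have h1 := ((hasDerivAt_id y).const_mul 2).sub (hasDerivAt_pow 2 y)
      simpa [Pi.sub_def] using h1
    have hC : HasDerivAt (fun z => Li2 (2*z - z^2))
        (-(Real.log (1 - (2*y-y^2))/(2*y-y^2)) * (2 - 2*y)) y :=
      HasDerivAt.comp (h₂ := Li2) (h := fun z : ℝ => 2*z - z^2) y (Li2_hasDerivAt hq0 hq1) hq'
    have hD : HasDerivAt (fun z : ℝ => (Real.log z)^2) (2 * Real.log y ^ 1 * y⁻¹) y := by
      exact_mod_cast (Real.hasDerivAt_log (ne_of_gt hy0)).pow 2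
    have hall := (((hA.sub hB).sub (hC.const_mul (1/2))).add_const (Real.pi^2/12)).sub
      (hD.const_mul (1/2))
    refine hall.congr_deriv ?_
    have e1 : (1 : ℝ) - (2 - y) = y - 1 := by ring
    have e2 : (1 : ℝ) - 1/y = (y-1)/y := by field_simp
    have e3 : (1 : ℝ) - (2*y - y^2) = (y-1)^2 := by ring
    have hy1' : y - 1 ≠ 0 := sub_ne_zero_of_ne (ne_of_gt hy1)
    rw [e1, e2, e3, Real.log_div hy1' (ne_of_gt hy0), Real.log_pow]
    have hq0' : 2*y - y^2 ≠ 0 := ne_of_gt hq0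
    have h2y0' : (2:ℝ) - y ≠ 0 := ne_of_gt h2y0
    field_simp
    ring
  -- continuity of F on [1,2]
  have hmaps1 : ∀ y ∈ Set.Icc (1:ℝ) 2, 2 - y ∈ Set.Icc (0:ℝ) 1 := by
    rintro y ⟨h1, h2⟩; constructor <;> [linarith; linarith]
  have hmaps2 : ∀ y ∈ Set.Icc (1:ℝ) 2, 1/y ∈ Set.Icc (0:ℝ) 1 := by
    rintro y ⟨h1, h2⟩
    constructor
    · positivity
    · rw [div_le_one (by linarith)]; linarith
  have hmaps3 : ∀ y ∈ Set.Icc (1:ℝ) 2, 2*y - y^2 ∈ Set.Icc (0:ℝ) 1 := by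
    rintro y ⟨h1, h2⟩; constructor <;> nlinarith
  have hFcont : ContinuousOn F (Set.Icc 1 2) := by
    have c1 : ContinuousOn (fun y : ℝ => Li2 (2 - y)) (Set.Icc 1 2) :=
      Li2_continuousOn.comp ((continuous_const.sub continuous_id).continuousOn) hmaps1
    have c2 : ContinuousOn (fun y : ℝ => Li2 (1/y)) (Set.Icc 1 2) :=
      Li2_continuousOn.comp
        (continuousOn_const.div continuousOn_id (fun y hy => by
          have h := hy.1; intro h2; rw [h2] at h; norm_num at h)) hmaps2
    have c3 : ContinuousOn (fun y : ℝ => Li2 (2*y - y^2)) (Set.Icc 1 2) :=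
      Li2_continuousOn.comp
        (((continuous_const.mul continuous_id).sub (continuous_pow 2)).continuousOn) hmaps3
    have c4 : ContinuousOn (fun y : ℝ => (Real.log y)^2) (Set.Icc 1 2) := by
      apply ContinuousOn.pow
      apply Real.continuousOn_log.mono
      intro y hy
      simp only [Set.mem_compl_iff, Set.mem_singleton_iff]
      have h := hy.1
      intro h2; rw [h2] at h; norm_num at h
    exact (((c1.sub c2).sub (continuousOn_const.mul c3)).add continuousOn_const).sub
      (continuousOn_const.mul c4)
  -- constancy on (1, x]
  have hconst : ∀ c, 1 < c → c ≤ x → F x = F c := by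
    intro c hc1 hcx
    have hcont : ContinuousOn F (Set.Icc c x) :=
      hFcont.mono (fun y hy => ⟨by linarith [hy.1], by linarith [hy.2]⟩)
    have hderiv : ∀ y ∈ Set.Ico c x, HasDerivWithinAt F 0 (Set.Ici y) y := by
      intro y hy
      exact (key y ⟨by linarith [hy.1], by linarith [hy.2, hx2]⟩).hasDerivWithinAt
    exact constant_of_has_deriv_right_zero hcont hderiv x ⟨hcx, le_refl x⟩
  -- take the limit c → 1⁺
  have hne : (nhdsWithin (1:ℝ) (Set.Ioo 1 x)).NeBot := by
    apply mem_closure_iff_nhdsWithin_neBot.1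
    rw [closure_Ioo (ne_of_lt hx1)]
    exact ⟨le_refl 1, hx1.le⟩
  have htend : Tendsto F (nhdsWithin 1 (Set.Ioo 1 x)) (nhds (F 1)) := by
    have h1 : ContinuousWithinAt F (Set.Icc 1 2) 1 := hFcont 1 ⟨le_refl 1, one_le_two⟩
    exact h1.tendsto.mono_left (nhdsWithin_mono 1 (fun y hy =>
      ⟨hy.1.le, by linarith [hy.2, hx2]⟩))
  have htend2 : Tendsto F (nhdsWithin 1 (Set.Ioo 1 x)) (nhds (F x)) := by
    apply Tendsto.congr' _ tendsto_const_nhds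
    filter_upwards [self_mem_nhdsWithin] with c hc
    exact hconst c hc.1 hc.2.le
  have hFx : F x = F 1 := tendsto_nhds_unique htend2 htend
  have hF1 : F 1 = 0 := by
    simp only [hF]
    norm_num [Li2_one]
    ring
  exact hFx.trans hF1
end

section
/- Li₂(-1/2) + (1/6)·Li₂(1/9) = -π²/18 + ln(2)·ln(3) - (1/2)·ln²(2) - (1/3)·ln²(3). -/
open Real MeasureTheory Set intervalIntegral Filter Topology

namespace Li2Aux


noncomputable def F (t : ℝ) : ℝ := Real.log (1 - t) / t

lemma measurable_F : Measurable F :=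
  ((Real.measurable_log.comp (measurable_const.sub measurable_id)).div measurable_id)

lemma abs_log_one_sub_le {t : ℝ} (h : |t| ≤ 1/2) : |Real.log (1 - t)| ≤ 2 * |t| := by
  rcases abs_le.1 h with ⟨h1, h2⟩
  rcases le_or_gt 0 t with ht | ht
  · have h1t : (0:ℝ) < 1 - t := by linarith
    have hlog : Real.log (1 - t) ≤ 0 := Real.log_nonpos (by linarith) (by linarith)
    rw [abs_of_nonpos hlog, abs_of_nonneg ht]
    have h3 : Real.log (1 - t)⁻¹ ≤ (1 - t)⁻¹ - 1 := Real.log_le_sub_one_of_pos (by positivity)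
    rw [Real.log_inv] at h3
    have h4 : (1 - t)⁻¹ - 1 = t / (1 - t) := by field_simp; ring
    rw [h4, le_div_iff₀ h1t] at h3
    nlinarith
  · have hlog : 0 ≤ Real.log (1 - t) := Real.log_nonneg (by linarith)
    rw [abs_of_nonneg hlog, abs_of_neg ht]
    have := Real.log_le_sub_one_of_pos (show (0:ℝ) < 1 - t by linarith)
    linarith

lemma abs_F_le {t : ℝ} (h : |t| ≤ 1/2) : |F t| ≤ 2 := by
  rcases eq_or_ne t 0 with rfl | ht
  · simp [F]
  · have := abs_log_one_sub_le h
    rw [F, abs_div, div_le_iff₀ (abs_pos.2 ht)]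
    linarith

lemma neg_log_le {u : ℝ} (hu : 0 < u) : -Real.log u ≤ 2 / Real.sqrt u := by
  have hs : 0 < Real.sqrt u := Real.sqrt_pos.2 hu
  have h1 : Real.log (Real.sqrt u)⁻¹ ≤ (Real.sqrt u)⁻¹ - 1 :=
    Real.log_le_sub_one_of_pos (by positivity)
  rw [Real.log_inv, Real.log_sqrt hu.le] at h1
  have h2 : (Real.sqrt u)⁻¹ = 1 / Real.sqrt u := inv_eq_one_div _
  rw [h2] at h1
  have h3 : 2 / Real.sqrt u = 2 * (1 / Real.sqrt u) := by ring
  have h4 : 0 ≤ 1 / Real.sqrt u := by positivity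
  rw [h3]
  linarith

lemma intervalIntegrable_F_mid : IntervalIntegrable F volume (-(1/2)) (1/2) := by
  rw [intervalIntegrable_iff_integrableOn_Ioc_of_le (by norm_num)]
  refine Integrable.mono' (integrable_const 2) measurable_F.aestronglyMeasurable ?_
  refine (ae_restrict_iff' measurableSet_Ioc).2 (Eventually.of_forall fun t ht => ?_)
  exact abs_F_le (abs_le.2 ⟨ht.1.le, ht.2⟩)

lemma intervalIntegrable_F_right : IntervalIntegrable F volume (1/2) 1 := by
  rw [intervalIntegrable_iff_integrableOn_Ioc_of_le (by norm_num)]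
  have hg : IntervalIntegrable (fun x : ℝ => 4 * (1 - x) ^ (-(1/2) : ℝ)) volume (1/2) 1 := by
    have h0 : IntervalIntegrable (fun x : ℝ => x ^ (-(1/2) : ℝ)) volume 0 (1/2) :=
      intervalIntegral.intervalIntegrable_rpow' (by norm_num)
    have h1 := ((h0.comp_sub_left 1).const_mul 4).symm
    norm_num at h1 ⊢
    exact h1
  rw [intervalIntegrable_iff_integrableOn_Ioc_of_le (by norm_num)] at hg
  refine Integrable.mono' hg measurable_F.aestronglyMeasurable ?_
  refine (ae_restrict_iff' measurableSet_Ioc).2 (Eventually.of_forall fun t ht => ?_)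
  obtain ⟨ht1, ht2⟩ := ht
  rcases eq_or_lt_of_le ht2 with rfl | ht2'
  · simp [F, Real.log_zero]
  · have h1t : (0:ℝ) < 1 - t := by linarith
    have hs : 0 < Real.sqrt (1 - t) := Real.sqrt_pos.2 h1t
    have hlog : Real.log (1 - t) ≤ 0 := Real.log_nonpos (by linarith) (by linarith)
    have habs : |F t| = -Real.log (1 - t) / t := by
      rw [F, abs_div, abs_of_nonpos hlog, abs_of_pos (by linarith : (0:ℝ) < t)]
    rw [Real.norm_eq_abs, habs]
    have h2 : -Real.log (1 - t) ≤ 2 / Real.sqrt (1 - t) := neg_log_le h1t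
    have h3 : -Real.log (1 - t) / t ≤ 2 * (-Real.log (1 - t)) := by
      rw [div_le_iff₀ (by linarith : (0:ℝ) < t)]
      nlinarith [neg_nonneg.2 hlog]
    have h4 : (1 - t) ^ (-(1/2) : ℝ) = 1 / Real.sqrt (1 - t) := by
      rw [Real.rpow_neg h1t.le, ← Real.sqrt_eq_rpow, inv_eq_one_div]
    rw [h4]
    have h5 : (4:ℝ) * (1 / Real.sqrt (1 - t)) = 2 * (2 / Real.sqrt (1 - t)) := by ring
    rw [h5]
    nlinarith [neg_nonneg.2 hlog]

lemma continuousOn_F {s : Set ℝ} (hs : ∀ t ∈ s, t ≠ 0 ∧ t < 1) : ContinuousOn F s := by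
  apply ContinuousOn.div
  · apply Real.continuousOn_log.comp (Continuous.continuousOn (by continuity))
    intro t ht
    simp only [Set.mem_compl_iff, Set.mem_singleton_iff]
    have := (hs t ht).2
    intro h
    linarith
  · exact continuousOn_id
  · exact fun t ht => (hs t ht).1

lemma intervalIntegrable_F_left : IntervalIntegrable F volume (-1) (-(1/2)) := by
  apply ContinuousOn.intervalIntegrable
  apply continuousOn_F
  intro t ht
  rw [Set.uIcc_of_le (by norm_num : (-1:ℝ) ≤ -(1/2))] at ht
  constructor
  · nlinarith [ht.1, ht.2]
  · nlinarith [ht.1, ht.2]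

lemma intervalIntegrable_F : IntervalIntegrable F volume (-1) 1 :=
  (intervalIntegrable_F_left.trans intervalIntegrable_F_mid).trans intervalIntegrable_F_right

lemma intervalIntegrable_F' {a b : ℝ} (ha : a ∈ Icc (-1:ℝ) 1) (hb : b ∈ Icc (-1:ℝ) 1) :
    IntervalIntegrable F volume a b := by
  apply intervalIntegrable_F.mono_set
  rw [Set.uIcc_subset_uIcc_iff_mem, Set.uIcc_of_le (by norm_num : (-1:ℝ) ≤ 1)]
  exact ⟨ha, hb⟩

lemma continuousOn_Li2 : ContinuousOn Li2 (Icc (-1:ℝ) 1) := by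
  have h := intervalIntegral.continuousOn_primitive_interval'
    (μ := volume) (f := F) intervalIntegrable_F (a := 0)
    (by rw [Set.uIcc_of_le (by norm_num : (-1:ℝ) ≤ 1)]; constructor <;> norm_num)
  rw [Set.uIcc_of_le (by norm_num : (-1:ℝ) ≤ 1)] at h
  exact h.neg

lemma Li2_zero : Li2 0 = 0 := by simp [Li2]

lemma hasDerivAt_Li2 {x : ℝ} (hx : x ∈ Icc (-1:ℝ) 1) (hx1 : x < 1) (hx0 : x ≠ 0) :
    HasDerivAt Li2 (-(Real.log (1 - x) / x)) x := by
  have h := intervalIntegral.integral_hasDerivAt_right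
    (intervalIntegrable_F' (a := 0) (by norm_num [Set.mem_Icc]) hx)
    measurable_F.stronglyMeasurable.stronglyMeasurableAtFilter
    (ContinuousAt.div ((Real.continuousAt_log (by linarith)).comp
      ((continuous_const.sub continuous_id).continuousAt)) continuousAt_id hx0)
  have := h.neg
  exact this





lemma hasSum_F {t : ℝ} (h : |t| < 1) (ht : t ≠ 0) :
    HasSum (fun n : ℕ => t ^ n / ((n:ℝ) + 1)) (-(Real.log (1 - t) / t)) := by
  have h2 := (hasSum_pow_div_log_of_abs_lt_one h).div_const t
  rw [neg_div] at h2
  refine h2.congr_fun (fun n => ?_)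
  rw [pow_succ]
  field_simp

lemma hasSum_inv_sq : HasSum (fun n : ℕ => 1 / ((n:ℝ) + 1) ^ 2) (π ^ 2 / 6) := by
  have h3 : HasSum (fun n : ℕ => (1:ℝ) / ((n + 1 : ℕ):ℝ) ^ 2) (π ^ 2 / 6) := by
    rw [hasSum_nat_add_iff (f := fun n : ℕ => (1:ℝ) / (n:ℝ) ^ 2) 1]
    simpa using hasSum_zeta_two
  convert h3 using 2 with n
  push_cast
  ring

lemma Li2_one : Li2 1 = π ^ 2 / 6 := by
  set μ := volume.restrict (Ioc (0:ℝ) 1)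
  have hval : ∀ n : ℕ, (∫ t, ‖t ^ n / ((n:ℝ)+1)‖ ∂μ) = 1 / ((n:ℝ)+1)^2 := by
    intro n
    have hcong : ∀ t ∈ Ioc (0:ℝ) 1, ‖t ^ n / ((n:ℝ)+1)‖ = t ^ n / ((n:ℝ)+1) := by
      intro t ht
      rw [Real.norm_eq_abs, abs_of_nonneg (div_nonneg (pow_nonneg ht.1.le n) (by positivity))]
    rw [MeasureTheory.setIntegral_congr_fun measurableSet_Ioc hcong]
    rw [← intervalIntegral.integral_of_le zero_le_one, intervalIntegral.integral_div, integral_pow]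
    push_cast
    rw [zero_pow (by omega), one_pow]
    field_simp
    ring
  have hF_int : ∀ n : ℕ, Integrable (fun t : ℝ => t ^ n / ((n:ℝ)+1)) μ :=
    fun n => ((continuous_pow n).div_const _).integrableOn_Ioc
  have hF_sum : Summable fun n : ℕ => ∫ t, ‖t ^ n / ((n:ℝ)+1)‖ ∂μ := by
    simp_rw [hval]
    exact hasSum_inv_sq.summable
  have hs := MeasureTheory.hasSum_integral_of_summable_integral_norm hF_int hF_sum
  have hne : ∀ᵐ t ∂μ, t ≠ (1:ℝ) := by
    apply ae_restrict_of_ae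
    rw [ae_iff]
    have : {t : ℝ | ¬ t ≠ 1} = {1} := by ext t; simp
    rw [this]
    exact measure_singleton 1
  have hcong2 : (∫ t, (∑' n : ℕ, t ^ n / ((n:ℝ)+1)) ∂μ) = ∫ t, -(F t) ∂μ := by
    apply MeasureTheory.integral_congr_ae
    filter_upwards [ae_restrict_mem measurableSet_Ioc, hne] with t ht ht1
    exact (hasSum_F (abs_lt.2 ⟨by linarith [ht.1], lt_of_le_of_ne ht.2 ht1⟩) (ne_of_gt ht.1)).tsum_eq
  rw [hcong2] at hs
  have hLi : (∫ t, -(F t) ∂μ) = Li2 1 := by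
    rw [MeasureTheory.integral_neg, Li2, ← intervalIntegral.integral_of_le zero_le_one]
    rfl
  rw [hLi] at hs
  have hs2 : HasSum (fun n : ℕ => 1 / ((n:ℝ)+1)^2) (Li2 1) := by
    refine hs.congr_fun (fun n => ?_)
    rw [← hval n]
    apply MeasureTheory.setIntegral_congr_fun measurableSet_Ioc
    intro t ht
    show ‖t ^ _ / _‖ = _
    rw [Real.norm_eq_abs, abs_of_nonneg (div_nonneg (pow_nonneg ht.1.le _) (by positivity))]
  exact hs2.unique hasSum_inv_sq




lemma hasDerivAt_log_one_sub {x : ℝ} (hx : x < 1) :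
    HasDerivAt (fun y : ℝ => Real.log (1 - y)) (-(1 - x)⁻¹) x := by
  have h1 : HasDerivAt (fun y : ℝ => 1 - y) (-1) x := (hasDerivAt_id x).const_sub 1
  have h2 := (Real.hasDerivAt_log (by linarith : (1:ℝ) - x ≠ 0)).comp x h1
  refine h2.congr_deriv ?_
  ring

lemma duplication {a : ℝ} (ha : -(1/2) ≤ a) (ha0 : a ≤ 0) :
    Li2 a + Li2 (-a) - (1/2) * Li2 (a^2) = 0 := by
  set f : ℝ → ℝ := fun x => Li2 x + Li2 (-x) - (1/2) * Li2 (x^2) with hf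
  have key : ∀ x ∈ Icc a 0, f x = f a := by
    apply constant_of_has_deriv_right_zero
    · apply ContinuousOn.sub
      apply ContinuousOn.add
      · exact continuousOn_Li2.mono (fun x hx => ⟨by linarith [hx.1], by linarith [hx.2]⟩)
      · apply continuousOn_Li2.comp continuous_neg.continuousOn
        intro x hx
        dsimp only
        exact ⟨by linarith [hx.2], by linarith [hx.1]⟩
      · apply ContinuousOn.mul continuousOn_const
        apply continuousOn_Li2.comp (continuous_pow 2).continuousOn
        intro x hx
        dsimp only
        constructor
        · nlinarith [hx.1, hx.2]
        · nlinarith [hx.1, hx.2]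
    · intro x hx
      rcases hx with ⟨hx1, hx2⟩
      have hxneg : x < 0 := hx2
      have hx0 : x ≠ 0 := ne_of_lt hxneg
      have h1 : HasDerivAt Li2 (-(Real.log (1-x)/x)) x :=
        hasDerivAt_Li2 ⟨by linarith, by linarith⟩ (by linarith) hx0
      have h2 : HasDerivAt Li2 (-(Real.log (1 - -x)/(-x))) (-x) :=
        hasDerivAt_Li2 ⟨by linarith, by linarith⟩ (by linarith) (by simpa using hx0)
      have h2c := h2.comp x (hasDerivAt_id x).neg
      have h3 : HasDerivAt Li2 (-(Real.log (1 - x^2)/(x^2))) ((fun y : ℝ => y^2) x) :=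
        hasDerivAt_Li2 ⟨by nlinarith, by nlinarith⟩ (by nlinarith) (pow_ne_zero 2 hx0)
      have hp : HasDerivAt (fun y : ℝ => y^2) (2*x) x := by
        simpa using hasDerivAt_pow 2 x
      have h3c0 : HasDerivAt (Li2 ∘ fun y : ℝ => y^2) (-(Real.log (1 - x^2)/(x^2)) * (2*x)) x :=
        HasDerivAt.comp x h3 hp
      have h3c := h3c0.const_mul (1/2 : ℝ)
      have hD := (h1.add h2c).sub h3c
      have e1 : (1:ℝ) - -x = 1 + x := by ring
      have e2 : (1:ℝ) - x^2 = (1-x) * (1+x) := by ring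
      rw [e1, e2, Real.log_mul (by linarith : (1:ℝ)-x ≠ 0) (by linarith : (1:ℝ)+x ≠ 0)] at hD
      have hD' : HasDerivAt f 0 x := by
        refine hD.congr_deriv ?_
        push_cast
        field_simp
        ring
      exact hD'.hasDerivWithinAt
  have h0 : f 0 = f a := key 0 ⟨ha0, le_refl 0⟩
  have hz : f 0 = 0 := by simp [hf, Li2_zero]
  have : f a = 0 := by rw [← h0, hz]
  simpa [hf] using this

lemma reflection_eq {b : ℝ} (hb : b ∈ Ico (1/2:ℝ) 1) :
    Li2 b + Li2 (1-b) + Real.log b * Real.log (1-b)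
      = 2 * Li2 (1/2) + (Real.log (1/2))^2 := by
  set f : ℝ → ℝ := fun x => Li2 x + Li2 (1-x) + Real.log x * Real.log (1-x) with hf
  have key : ∀ x ∈ Icc (1/2:ℝ) b, f x = f (1/2) := by
    apply constant_of_has_deriv_right_zero
    · apply ContinuousOn.add
      apply ContinuousOn.add
      · exact continuousOn_Li2.mono (fun x hx => ⟨by linarith [hx.1], by linarith [hx.2, hb.2]⟩)
      · apply continuousOn_Li2.comp
          (Continuous.continuousOn (show Continuous fun x : ℝ => 1 - x by continuity))
        intro x hx
        dsimp only
        exact ⟨by linarith [hx.2, hb.2], by linarith [hx.1]⟩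
      · apply ContinuousOn.mul
        · exact ContinuousOn.log continuousOn_id
            (fun x hx => ne_of_gt (by linarith [hx.1] : (0:ℝ) < x))
        · exact ContinuousOn.log (Continuous.continuousOn (by continuity))
            (fun x hx => ne_of_gt (by linarith [hx.2, hb.2] : (0:ℝ) < 1 - x))
    · intro x hx
      rcases hx with ⟨hx1, hx2⟩
      have hxpos : (0:ℝ) < x := by linarith
      have hxlt : x < 1 := by linarith [hb.2]
      have hx0 : x ≠ 0 := ne_of_gt hxpos
      have h1 : HasDerivAt Li2 (-(Real.log (1-x)/x)) x :=
        hasDerivAt_Li2 ⟨by linarith, by linarith⟩ hxlt hx0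
      have h2 : HasDerivAt Li2 (-(Real.log (1 - (1-x))/(1-x))) (1-x) :=
        hasDerivAt_Li2 ⟨by linarith, by linarith⟩ (by linarith) (ne_of_gt (by linarith : (0:ℝ) < 1 - x))
      have h2c := h2.comp x ((hasDerivAt_id x).const_sub 1)
      have h3 := (Real.hasDerivAt_log hx0).mul (hasDerivAt_log_one_sub hxlt)
      have hD := (h1.add h2c).add h3
      have e1 : (1:ℝ) - (1-x) = x := by ring
      rw [e1] at hD
      have hD' : HasDerivAt f 0 x := by
        refine hD.congr_deriv ?_
        field_simp
        ring
      exact hD'.hasDerivWithinAt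
  have := key b ⟨hb.1, le_refl b⟩
  rw [hf] at this
  simp only at this
  rw [this]
  norm_num
  ring

lemma Li2_half : Li2 (1/2) = π^2/12 - (1/2) * (Real.log 2)^2 := by
  set f : ℝ → ℝ := fun x => Li2 x + Li2 (1-x) + Real.log x * Real.log (1-x) with hf
  set l : Filter ℝ := 𝓝[Ico (1/2:ℝ) 1] 1 with hl
  have hne : l.NeBot := right_nhdsWithin_Ico_neBot (by norm_num)
  have hconst : ∀ᶠ b in l, f b = 2 * Li2 (1/2) + (Real.log (1/2))^2 := by
    filter_upwards [self_mem_nhdsWithin] with b hb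
    exact reflection_eq hb
  have ht1 : Tendsto Li2 l (𝓝 (Li2 1)) := by
    apply (continuousOn_Li2 1 (by norm_num [Set.mem_Icc])).tendsto.mono_left
    exact nhdsWithin_mono 1 (fun x hx => ⟨by linarith [hx.1], le_of_lt hx.2⟩)
  have hsub : Tendsto (fun b : ℝ => 1 - b) l (𝓝[Icc (-1:ℝ) 1] 0) := by
    apply tendsto_nhdsWithin_of_tendsto_nhds_of_eventually_within
    · have h := Continuous.tendsto (show Continuous fun b : ℝ => 1 - b by continuity) 1
      norm_num at h
      exact h.mono_left nhdsWithin_le_nhds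
    · filter_upwards [self_mem_nhdsWithin] with b hb
      exact ⟨by linarith [hb.2], by linarith [hb.1]⟩
  have ht2 : Tendsto (fun b : ℝ => Li2 (1-b)) l (𝓝 (Li2 0)) :=
    (continuousOn_Li2 0 (by norm_num [Set.mem_Icc])).tendsto.comp hsub
  have hsub' : Tendsto (fun b : ℝ => 1 - b) l (𝓝[>] (0:ℝ)) := by
    apply tendsto_nhdsWithin_of_tendsto_nhds_of_eventually_within
    · have h := Continuous.tendsto (show Continuous fun b : ℝ => 1 - b by continuity) 1
      norm_num at h
      exact h.mono_left nhdsWithin_le_nhds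
    · filter_upwards [self_mem_nhdsWithin] with b hb
      simp only [Set.mem_Ioi]
      linarith [hb.2]
  have hlog0 : Tendsto (fun b : ℝ => Real.log (1-b) * (1-b)) l (𝓝 0) := by
    have h := tendsto_log_mul_rpow_nhdsGT_zero (r := 1) one_pos
    have h2 := h.comp hsub'
    simp only [Function.comp_def, Real.rpow_one] at h2
    exact h2
  have ht3 : Tendsto (fun b : ℝ => Real.log b * Real.log (1-b)) l (𝓝 0) := by
    refine squeeze_zero_norm' (a := fun b => 2 * ‖Real.log (1-b) * (1-b)‖) ?_ ?_
    · filter_upwards [self_mem_nhdsWithin] with b hb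
      rcases hb with ⟨hb1, hb2⟩
      have hb3 : (0:ℝ) < b := by linarith
      have h1b : (0:ℝ) < 1 - b := by linarith
      have hlogb : Real.log b ≤ 0 := Real.log_nonpos (by linarith) (by linarith)
      have h4 : Real.log b⁻¹ ≤ b⁻¹ - 1 := Real.log_le_sub_one_of_pos (by positivity)
      rw [Real.log_inv] at h4
      have h5 : b⁻¹ - 1 = (1-b)/b := by field_simp
      rw [h5, le_div_iff₀ hb3] at h4
      rw [Real.norm_eq_abs, Real.norm_eq_abs, abs_mul, abs_mul, abs_of_pos h1b,
        abs_of_nonpos hlogb]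
      have hA : -Real.log b ≤ 2*(1-b) := by nlinarith
      have hB := mul_le_mul_of_nonneg_right hA (abs_nonneg (Real.log (1-b)))
      nlinarith [hB]
    · have := (hlog0.norm.const_mul (2:ℝ))
      simpa using this
  have htot : Tendsto f l (𝓝 (Li2 1 + Li2 0 + 0)) := (ht1.add ht2).add ht3
  have heq : Li2 1 + Li2 0 + 0 = 2 * Li2 (1/2) + (Real.log (1/2))^2 :=
    tendsto_nhds_unique (Tendsto.congr' hconst htot) tendsto_const_nhds
  rw [Li2_one, Li2_zero] at heq
  have hlog : Real.log (1/2) = -Real.log 2 := by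
    rw [one_div, Real.log_inv]
  rw [hlog] at heq
  nlinarith [heq]



lemma landen {a : ℝ} (ha : -(1/2) ≤ a) (ha0 : a ≤ 0) :
    Li2 a + Li2 (a/(a-1)) + (1/2) * (Real.log (1-a))^2 = 0 := by
  set f : ℝ → ℝ := fun x => Li2 x + Li2 (x/(x-1)) + (1/2) * (Real.log (1-x))^2 with hf
  have hmaps : ∀ x ∈ Icc a 0, x/(x-1) ∈ Icc (0:ℝ) (1/2) := by
    intro x hx
    have hx1 : x - 1 < 0 := by rcases hx with ⟨h1, h2⟩; linarith
    constructor
    · exact div_nonneg_of_nonpos hx.2 hx1.le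
    · rw [div_le_iff_of_neg hx1]
      rcases hx with ⟨h1, h2⟩; linarith
  have key : ∀ x ∈ Icc a 0, f x = f a := by
    apply constant_of_has_deriv_right_zero
    · apply ContinuousOn.add
      apply ContinuousOn.add
      · exact continuousOn_Li2.mono (fun x hx => ⟨by linarith [hx.1], by linarith [hx.2]⟩)
      · apply continuousOn_Li2.comp
        · exact fun x hx => (continuousOn_id.div (continuousOn_id.sub continuousOn_const)
            (fun x hx => by rcases hx with ⟨h1, h2⟩; intro h; simp at h; linarith)) x hx
        · intro x hx
          have := hmaps x hx
          exact ⟨by linarith [this.1], by linarith [this.2]⟩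
      · apply ContinuousOn.mul continuousOn_const
        apply ContinuousOn.pow
        apply Real.continuousOn_log.comp (Continuous.continuousOn (by continuity))
        intro x hx
        rcases hx with ⟨h1, h2⟩
        simp only [Set.mem_compl_iff, Set.mem_singleton_iff]
        intro h; linarith
    · intro x hx
      rcases hx with ⟨hx1, hx2⟩
      have hxneg : x < 0 := hx2
      have hxm1 : x - 1 < 0 := by linarith
      have hxm1' : x - 1 ≠ 0 := ne_of_lt hxm1
      have hu : HasDerivAt (fun y : ℝ => y/(y-1)) ((1*(x-1) - x*1)/(x-1)^2) x :=
        (hasDerivAt_id x).div ((hasDerivAt_id x).sub_const 1) hxm1'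
      have humem : x/(x-1) ∈ Icc (0:ℝ) (1/2) := hmaps x ⟨hx1, hxneg.le⟩
      have hupos : 0 < x/(x-1) := div_pos_of_neg_of_neg hxneg hxm1
      have h1 : HasDerivAt Li2 (-(Real.log (1-x)/x)) x :=
        hasDerivAt_Li2 ⟨by linarith, by linarith⟩ (by linarith) (ne_of_lt hxneg)
      have h2 : HasDerivAt Li2 (-(Real.log (1 - x/(x-1))/(x/(x-1)))) (x/(x-1)) :=
        hasDerivAt_Li2 ⟨by linarith [humem.1], by linarith [humem.2]⟩
          (by linarith [humem.2]) (ne_of_gt hupos)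
      have h3 := h2.comp x hu
      have h4 := ((hasDerivAt_log_one_sub (by linarith : x < 1)).pow 2).const_mul (1/2 : ℝ)
      have hD := (h1.add h3).add h4
      have h1x : (1:ℝ) - x ≠ 0 := by linarith
      have hx0 : x ≠ 0 := ne_of_lt hxneg
      have hsub : (1:ℝ) - x/(x-1) = (1-x)⁻¹ := by
        field_simp
        ring
      rw [hsub, Real.log_inv] at hD
      have hD' : HasDerivAt f 0 x := by
        refine hD.congr_deriv ?_
        push_cast
        field_simp
        ring
      exact hD'.hasDerivWithinAt
  have h0 : f 0 = f a := key 0 ⟨ha0, le_refl 0⟩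
  have hz : f 0 = 0 := by simp [hf, Li2_zero]
  have : f a = 0 := by rw [← h0, hz]
  simpa [hf] using this


end Li2Aux

open Li2Aux in
theorem ramanujan_identity :
    Li2 (-1/2) + (1/6) * Li2 (1/9)
      = -Real.pi ^ 2 / 18 + Real.log 2 * Real.log 3
        - (1/2) * (Real.log 2) ^ 2 - (1/3) * (Real.log 3) ^ 2 := by
  have hE1 := landen (a := -(1/2)) (by norm_num) (by norm_num)
  have hE2 := landen (a := -(1/3)) (by norm_num) (by norm_num)
  have hE3 := duplication (a := -(1/3)) (by norm_num) (by norm_num)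
  have hE4 := duplication (a := -(1/2)) (by norm_num) (by norm_num)
  have hE5 := Li2_half
  norm_num at hE1 hE2 hE3 hE4 ⊢
  have hlog32 : Real.log (3/2) = Real.log 3 - Real.log 2 :=
    Real.log_div (by norm_num) (by norm_num)
  have hlog43 : Real.log (4/3) = 2*Real.log 2 - Real.log 3 := by
    rw [Real.log_div (by norm_num) (by norm_num),
      show (4:ℝ) = 2^2 by norm_num, Real.log_pow]
    push_cast
    ring
  rw [hlog32] at hE1
  rw [hlog43] at hE2
  linear_combination (1/3 : ℝ) * hE1 + (1/3 : ℝ) * hE2 + (-(1/3) : ℝ) * hE3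
    + (2/3 : ℝ) * hE4 + (-(2/3) : ℝ) * hE5
end

section
/- Suppose x > 1 is a real number and n > m > 0 are real numbers satisfying x^n - x^m - 1 = 0. Then Li₂(1/x^{n-m}) + Li₂(-x^m) = -(n²/2)·ln²(x). In particular, for the golden ratio φ (satisfying φ² - φ - 1 = 0), Li₂(1/φ) + Li₂(-φ) = -2·ln²(φ). -/
open Real MeasureTheory Set

noncomputable def gfun (t : ℝ) : ℝ := if t = 0 then -1 else Real.log (1 - t) / t

lemma gfun_ne {t : ℝ} (ht : t ≠ 0) : gfun t = Real.log (1 - t) / t := if_neg ht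

lemma Li2_eq (x : ℝ) : Li2 x = -∫ t in (0:ℝ)..x, gfun t := by
  unfold Li2
  congr 1
  apply intervalIntegral.integral_congr_ae
  have h0 : ∀ᵐ t : ℝ, t ≠ 0 := by
    refine ae_iff.mpr ?_
    simp
  filter_upwards [h0] with t ht _
  rw [gfun_ne ht]

lemma gfun_contAt {t : ℝ} (ht : t < 1) : ContinuousAt gfun t := by
  rcases eq_or_ne t 0 with rfl | hne
  · have hd : HasDerivAt (fun s : ℝ => Real.log (1 - s)) (-1) 0 := by
      have h1 : HasDerivAt (fun s : ℝ => 1 - s) (-1) 0 := by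
        simpa using (hasDerivAt_id (0:ℝ)).const_sub 1
      have h2 := h1.log (by norm_num : (1:ℝ) - 0 ≠ 0)
      simpa using h2
    have hs := hasDerivAt_iff_tendsto_slope.mp hd
    rw [ContinuousAt]
    have hg0 : gfun 0 = -1 := if_pos rfl
    rw [hg0, ← nhdsNE_sup_pure]
    refine Filter.Tendsto.sup ?_ ?_
    · refine hs.congr' ?_
      filter_upwards [self_mem_nhdsWithin] with s hs'
      have hs0 : s ≠ 0 := hs'
      simp [slope, gfun_ne hs0, sub_zero, div_eq_inv_mul]
    · simpa [hg0] using (tendsto_pure_nhds gfun 0)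
  · have hc : ContinuousAt (fun s : ℝ => Real.log (1 - s) / s) t := by
      refine ContinuousAt.div ?_ continuousAt_id hne
      exact (Real.continuousAt_log (by linarith : (1:ℝ) - t ≠ 0)).comp
        (by fun_prop : ContinuousAt (fun s : ℝ => 1 - s) t)
    refine hc.congr ?_
    filter_upwards [isOpen_compl_singleton.mem_nhds hne] with s hs
    exact (gfun_ne hs).symm

lemma gfun_contOn : ContinuousOn gfun (Iio 1) :=
  fun t ht => (gfun_contAt ht).continuousWithinAt

lemma Li2_hasDerivAt_s18 {x : ℝ} (hx : x < 1) : HasDerivAt Li2 (-(gfun x)) x := by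
  have hint : IntervalIntegrable gfun volume 0 x := by
    apply ContinuousOn.intervalIntegrable
    apply gfun_contOn.mono
    intro t htt
    rcases le_total 0 x with hc | hc
    · rw [uIcc_of_le hc] at htt; exact lt_of_le_of_lt htt.2 hx
    · rw [uIcc_of_ge hc] at htt; exact lt_of_le_of_lt htt.2 (by norm_num)
  have hmeas : StronglyMeasurableAtFilter gfun (nhds x) :=
    gfun_contOn.stronglyMeasurableAtFilter isOpen_Iio x hx
  have hP := intervalIntegral.integral_hasDerivAt_right hint hmeas (gfun_contAt hx)
  have : HasDerivAt (fun y => -∫ t in (0:ℝ)..y, gfun t) (-(gfun x)) x := hP.neg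
  exact this.congr_of_eventuallyEq (by
    filter_upwards with y using (Li2_eq y))

noncomputable def F (z : ℝ) : ℝ := Li2 z + Li2 (z / (z - 1)) + (Real.log (1 - z)) ^ 2 / 2

lemma hmap {z : ℝ} (hz : z < 1) : z / (z - 1) < 1 := by
  have h1 : z - 1 < 0 := by linarith
  have h1ne : z - 1 ≠ 0 := ne_of_lt h1
  have : z / (z - 1) = 1 + 1 / (z - 1) := by field_simp; ring
  rw [this]
  have : 1 / (z - 1) < 0 := div_neg_of_pos_of_neg one_pos h1
  linarith

lemma F_deriv {z : ℝ} (hz : z < 1) : HasDerivAt F 0 z := by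
  have hz1 : z - 1 ≠ 0 := by intro hc; nlinarith
  have h1z : (0:ℝ) < 1 - z := by linarith
  have hd1 : HasDerivAt Li2 (-(gfun z)) z := Li2_hasDerivAt_s18 hz
  have hdiv : HasDerivAt (fun z : ℝ => z / (z - 1)) (-1 / (z - 1) ^ 2) z := by
    have hd := (hasDerivAt_id z).div ((hasDerivAt_id z).sub_const 1) hz1
    refine hd.congr_deriv ?_
    simp only [id]; ring
  have hd2 : HasDerivAt (fun z : ℝ => Li2 (z / (z - 1)))
      (-(gfun (z / (z - 1))) * (-1 / (z - 1) ^ 2)) z :=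
    HasDerivAt.comp (h₂ := Li2) (h := fun z : ℝ => z / (z - 1)) z (Li2_hasDerivAt_s18 (hmap hz)) hdiv
  have hd3 : HasDerivAt (fun z : ℝ => (Real.log (1 - z)) ^ 2 / 2)
      (Real.log (1 - z) * (-1 / (1 - z))) z := by
    have hl : HasDerivAt (fun z : ℝ => Real.log (1 - z)) (-1 / (1 - z)) z := by
      have h1 : HasDerivAt (fun s : ℝ => 1 - s) (-1) z := by
        simpa using (hasDerivAt_id z).const_sub 1
      have h2 := h1.log (ne_of_gt h1z)
      simpa using h2
    have := (hl.pow 2).div_const 2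
    refine this.congr_deriv ?_
    push_cast
    ring
  have htot := (hd1.add hd2).add hd3
  refine htot.congr_deriv ?_
  rcases eq_or_ne z 0 with rfl | hzne
  · simp [gfun]
  · have hq : z / (z - 1) ≠ 0 := div_ne_zero hzne hz1
    have hmz : 1 - z / (z - 1) = 1 / (1 - z) := by field_simp; ring
    rw [gfun_ne hzne, gfun_ne hq, hmz, Real.log_div one_ne_zero (ne_of_gt h1z),
      Real.log_one]
    field_simp
    ring
  done

lemma F_eq_zero {u : ℝ} (h0 : 0 ≤ u) (h1 : u < 1) : F u = 0 := by
  have hF0 : F 0 = 0 := by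
    simp [F, Li2]
  have := constant_of_has_deriv_right_zero (f := F) (a := 0) (b := u)
    (fun t ht => ((F_deriv (lt_of_le_of_lt ht.2 h1)).continuousAt).continuousWithinAt)
    (fun t ht => ((F_deriv (lt_of_le_of_lt (le_of_lt ht.2) h1)).hasDerivWithinAt))
  rw [← hF0]
  exact this u (by constructor <;> [exact h0; rfl])

theorem trinomial_identity (x n m : ℝ) (hx : 1 < x) (hm : 0 < m) (hmn : m < n)
    (h : x ^ n - x ^ m - 1 = 0) :
    Li2 (1 / x ^ (n - m)) + Li2 (-(x ^ m)) = -(n ^ 2 / 2) * (Real.log x) ^ 2 := by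
  have hx0 : (0:ℝ) < x := by linarith
  set u : ℝ := 1 / x ^ (n - m) with hu
  have hupos : 0 < u := by positivity
  have hurw : u = x ^ (m - n) := by
    rw [hu, one_div, ← Real.rpow_neg hx0.le, neg_sub]
  have hult : u < 1 := by
    rw [hurw]
    exact Real.rpow_lt_one_of_one_lt_of_neg hx (by linarith)
  have h1u : 1 - u = x ^ (-n) := by
    have e1 : x ^ (-n) * x ^ n = 1 := by
      rw [← Real.rpow_add hx0]; norm_num
    have e2 : x ^ (-n) * x ^ m = x ^ (m - n) := by
      rw [← Real.rpow_add hx0]; congr 1; ring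
    have hxn : x ^ n - x ^ m = 1 := by linarith
    calc 1 - u = x ^ (-n) * x ^ n - x ^ (-n) * x ^ m := by rw [e1, e2, hurw]
    _ = x ^ (-n) * (x ^ n - x ^ m) := by ring
    _ = x ^ (-n) := by rw [hxn, mul_one]
  have hmapu : u / (u - 1) = -(x ^ m) := by
    have hu1 : u - 1 = -(x ^ (-n)) := by linarith [h1u]
    have e3 : u / (u - 1) = -(x ^ (m - n) / x ^ (-n)) := by
      rw [hu1, hurw, div_neg]
    rw [e3, ← Real.rpow_sub hx0]
    have e4 : m - n - -n = m := by ring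
    rw [e4]
  have hkey := F_eq_zero hupos.le hult
  unfold F at hkey
  rw [hmapu, h1u, Real.log_rpow hx0] at hkey
  have e5 : (-n * Real.log x) ^ 2 / 2 = n ^ 2 / 2 * (Real.log x) ^ 2 := by ring
  rw [e5] at hkey
  linarith
end
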